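/- Let J : ℝⁿ → M_n(ℝ) with J(x) antisymmetric for every x, G : ℝⁿ → M_n(ℝ) with G(x) symmetric positive semidefinite for every x, and H, S, C₁,…,C_m : ℝⁿ → ℝ continuously differentiable such that G(x)∇H(x) = 0, J(x)∇S(x) = 0, and J(x)∇C_i(x) = 0 and G(x)∇C_i(x) = 0 for all x and all i = 1,…,m. Suppose that at a point p₀ ∈ ℝⁿ there exist real numbers α ≠ 0 and β₁,…,β_m such that ∇S(p₀) = α∇H(p₀) + Σ_{i=1}^m β_i ∇C_i(p₀) (as given by the Lagrange multiplier theorem at a constrained maximum of S). Then p₀ is an equilibrium of the metriplectic dynamics: J(p₀)∇H(p₀) + G(p₀)∇S(p₀) = 0. -/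
import Mathlib


open Matrix

lemma mulVec_sum' {n k : ℕ} (A : Matrix (Fin n) (Fin n) ℝ) (v : Fin k → Fin n → ℝ) :
    A *ᵥ (∑ i, v i) = ∑ i, A *ᵥ v i := by
  have := map_sum A.mulVecLin v Finset.univ
  simp only [Matrix.mulVecLin_apply] at this
  exact this


/-- The Euclidean gradient of `H : ℝⁿ → ℝ`. -/
noncomputable def euclGrad {n : ℕ} (H : (Fin n → ℝ) → ℝ) (x : Fin n → ℝ) :
    Fin n → ℝ :=
  fun i => fderiv ℝ H x (Pi.single i 1)

/-- Maximum entropy principle yields equilibria: for a metriplectic system with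
antisymmetric `J`, symmetric positive semidefinite `G`, degeneracies
`G∇H = 0`, `J∇S = 0`, and invariants `C i` satisfying `J∇Cᵢ = G∇Cᵢ = 0`, if at a
point `p₀` the Lagrange multiplier relation
`∇S(p₀) = α∇H(p₀) + Σ βᵢ∇Cᵢ(p₀)` holds with `α ≠ 0`, then `p₀` is an equilibrium:
`J(p₀)∇H(p₀) + G(p₀)∇S(p₀) = 0`. -/
theorem stmt_7 {n m : ℕ}
    (J G : (Fin n → ℝ) → Matrix (Fin n) (Fin n) ℝ)
    (hJanti : ∀ x, (J x)ᵀ = -(J x))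
    (hGpsd : ∀ x, (G x).PosSemidef)
    (H S : (Fin n → ℝ) → ℝ) (C : Fin m → (Fin n → ℝ) → ℝ)
    (hH : ContDiff ℝ 1 H) (hS : ContDiff ℝ 1 S) (hC : ∀ i, ContDiff ℝ 1 (C i))
    (hGH : ∀ x, G x *ᵥ euclGrad H x = 0)
    (hJS : ∀ x, J x *ᵥ euclGrad S x = 0)
    (hJC : ∀ i x, J x *ᵥ euclGrad (C i) x = 0)
    (hGC : ∀ i x, G x *ᵥ euclGrad (C i) x = 0)
    (p₀ : Fin n → ℝ) (α : ℝ) (hα : α ≠ 0) (β : Fin m → ℝ)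
    (hLagrange : euclGrad S p₀ =
      α • euclGrad H p₀ + ∑ i, β i • euclGrad (C i) p₀) :
    J p₀ *ᵥ euclGrad H p₀ + G p₀ *ᵥ euclGrad S p₀ = 0 := by
  have hJH : J p₀ *ᵥ (α • euclGrad H p₀) = 0 := by
    have h := congrArg (fun v => J p₀ *ᵥ v) hLagrange
    simp only [Matrix.mulVec_add, hJS] at h
    have hsum : J p₀ *ᵥ (∑ i, β i • euclGrad (C i) p₀) = 0 := by
      rw [mulVec_sum' (J p₀)]
      refine Finset.sum_eq_zero fun i _ => ?_
      rw [Matrix.mulVec_smul, hJC i p₀, smul_zero]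
    rw [hsum, add_zero] at h
    exact h.symm
  have hJH' : J p₀ *ᵥ euclGrad H p₀ = 0 := by
    rw [Matrix.mulVec_smul] at hJH
    exact (smul_eq_zero.mp hJH).resolve_left hα
  have hGS : G p₀ *ᵥ euclGrad S p₀ = 0 := by
    rw [hLagrange, Matrix.mulVec_add, Matrix.mulVec_smul, hGH, smul_zero,
      mulVec_sum' (G p₀), zero_add]
    refine Finset.sum_eq_zero fun i _ => ?_
    rw [Matrix.mulVec_smul, hGC i p₀, smul_zero]
  rw [hJH', hGS, add_zero]
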